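/- Let β, c be real parameters. For every nonzero real polynomial p there exists a real polynomial q with deg q < deg p (in particular q = 0 when p is constant) such that for every x ≠ 0, (𝔇 p)(x) = q(x); that is, the generalized Dunkl operator 𝔇 maps any polynomial of degree n to a polynomial of degree at most n − 1. -/

import Mathlib

noncomputable section

/-- The generalized Dunkl operator `𝔇`: acts on `f` at `x ≠ 0` by
`A(x)(f(x) - f(-x)) + B(x) f'(x) - C(x) f'(-x)` (the last term being `C(x)` times
minus the value at `x` of the derivative of the reflection `t ↦ f (-t)`). -/
noncomputable def Dop (β c : ℝ) (f : ℝ → ℝ) (x : ℝ) : ℝ :=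
  (c ^ 2 / x ^ 3 - c * (c - 1) / (2 * x ^ 2) + β * (c + 1) / (2 * x)) * (f x - f (-x))
    + ((x ^ 2 - c ^ 2) / x ^ 2) * deriv f x
    - (c * (x + c) * (1 - x) / x ^ 2) * deriv f (-x)

open Polynomial in
/-- The generalized Dunkl operator `𝔇` maps any nonzero polynomial of degree `n`
to a polynomial of degree at most `n - 1` (in particular to `0` when `n = 0`). -/
theorem D_lowers_degree (β c : ℝ) (p : Polynomial ℝ) (hp : p ≠ 0) :
    ∃ q : Polynomial ℝ, q.degree < p.degree ∧
      ∀ x : ℝ, x ≠ 0 → Dop β c (fun t => p.eval t) x = q.eval x := by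
  rcases Nat.eq_zero_or_pos p.natDegree with hn0 | hn
  · obtain ⟨a, rfl⟩ := Polynomial.natDegree_eq_zero.mp hn0
    refine ⟨0, ?_, ?_⟩
    · simpa using bot_lt_iff_ne_bot.mpr (by rwa [Ne, Polynomial.degree_eq_bot])
    · intro x hx
      simp [Dop]
  · set r : ℝ[X] := p /ₘ (X ^ 3) with hr
    set m : ℝ[X] := p %ₘ (X ^ 3) with hm
    set b0 := m.coeff 0
    set b1 := m.coeff 1
    set b2 := m.coeff 2
    have hmdeg : m.natDegree < 3 := by
      rcases eq_or_ne m 0 with h | h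
      · simp [h]
      · have := degree_modByMonic_lt p (monic_X_pow (R := ℝ) 3)
        rw [← hm] at this
        have h3 : (X ^ 3 : ℝ[X]).degree = 3 := by simp
        rw [h3] at this
        exact (natDegree_lt_iff_degree_lt h).mpr (by exact_mod_cast this)
    have hm3 : m = C b0 + C b1 * X + C b2 * X ^ 2 := by
      conv_lhs => rw [m.as_sum_range' 3 hmdeg]
      simp [Finset.sum_range_succ, ← C_mul_X_pow_eq_monomial]
      rfl
    have hp3 : p = X ^ 3 * r + (C b0 + C b1 * X + C b2 * X ^ 2) := by
      rw [← hm3, hr, hm, add_comm]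
      exact (modByMonic_add_div p (X ^ 3)).symm
    have hd : p.derivative = 3 * X ^ 2 * r + X ^ 3 * r.derivative + (C b1 + 2 * C b2 * X) := by
      rw [hp3]
      simp [derivative_X_pow, map_ofNat]
      ring
    have hc : p.comp (-X) = -(X ^ 3) * (r.comp (-X)) + (C b0 - C b1 * X + C b2 * X ^ 2) := by
      rw [hp3]
      simp [mul_comp, pow_comp]
      ring
    have hdc : p.derivative.comp (-X)
        = 3 * X ^ 2 * (r.comp (-X)) - X ^ 3 * (r.derivative.comp (-X)) + (C b1 - 2 * C b2 * X) := by
      rw [hd]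
      simp [mul_comp, pow_comp]
      ring
    set q2 : ℝ[X] :=
        2 * C b1 * (1 + C β) * (1 + C c) + 4 * C b2 * C c * (1 - C c) + 4 * C b2 * (1 - C c) * X
        + (-(4 * C c ^ 2) + C c * (1 - C c) * X + (6 + C β * (1 + C c)) * X ^ 2) * r
        + (-(4 * C c ^ 2) + 5 * C c * (C c - 1) * X + (6 * C c + C β * (1 + C c)) * X ^ 2)
            * (r.comp (-X))
        + (-(2 * C c ^ 2) * X + 2 * X ^ 3) * r.derivative
        + (2 * C c ^ 2 * X + 2 * C c * (1 - C c) * X ^ 2 - 2 * C c * X ^ 3)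
            * (r.derivative.comp (-X)) with hq2
    have hN : (2 * C c ^ 2 - C c * (C c - 1) * X + C β * (C c + 1) * X ^ 2) * (p - p.comp (-X))
        + (2 * X ^ 3 - 2 * C c ^ 2 * X) * p.derivative
        - (2 * C c * X ^ 2 + 2 * C c ^ 2 * X - 2 * C c * X ^ 3 - 2 * C c ^ 2 * X ^ 2)
            * (p.derivative.comp (-X))
        = X ^ 3 * q2 := by
      rw [hdc, hc, hd, hq2]
      conv_lhs => rw [hp3]
      ring
    have heval : ∀ x : ℝ, x ≠ 0 → Dop β c (fun t => p.eval t) x = (C (2⁻¹:ℝ) * q2).eval x := by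
      intro x hx
      have hE := congrArg (Polynomial.eval x) hN
      simp only [eval_add, eval_sub, eval_mul, eval_pow, eval_neg, eval_ofNat, eval_C, eval_X,
        eval_comp, eval_one] at hE
      have hq2x : eval x q2 =
          ((2*c^2 - c*(c-1)*x + β*(c+1)*x^2) * (eval x p - eval (-x) p)
            + (2*x^3 - 2*c^2*x) * eval x (derivative p)
            - (2*c*x^2 + 2*c^2*x - 2*c*x^3 - 2*c^2*x^2) * eval (-x) (derivative p)) / x^3 := by
        rw [eq_div_iff (pow_ne_zero 3 hx)]
        linear_combination -hE
      simp only [Dop, Polynomial.deriv]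
      rw [eval_mul, eval_C, hq2x]
      field_simp
      ring
    refine ⟨C (2⁻¹:ℝ) * q2, ?_, heval⟩
    rcases eq_or_ne q2 0 with h0 | h0
    · rw [h0, mul_zero, degree_zero]
      exact bot_lt_iff_ne_bot.mpr (by rwa [Ne, degree_eq_bot])
    · have hA : (2 * C c ^ 2 - C c * (C c - 1) * X + C β * (C c + 1) * X ^ 2 : ℝ[X]).natDegree ≤ 2 := by
        compute_degree
      have hcomp : (p.comp (-X)).natDegree ≤ p.natDegree := by
        refine natDegree_comp_le.trans ?_
        simp
      have h1 : ((2 * C c ^ 2 - C c * (C c - 1) * X + C β * (C c + 1) * X ^ 2)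
          * (p - p.comp (-X))).natDegree ≤ p.natDegree + 2 := by
        refine natDegree_mul_le.trans ?_
        have hB : (p - p.comp (-X)).natDegree ≤ p.natDegree :=
          (natDegree_sub_le _ _).trans (by omega)
        omega
      have hA2 : (2 * X ^ 3 - 2 * C c ^ 2 * X : ℝ[X]).natDegree ≤ 3 := by compute_degree
      have hder : (derivative p).natDegree ≤ p.natDegree - 1 := natDegree_derivative_le p
      have h2 : ((2 * X ^ 3 - 2 * C c ^ 2 * X) * derivative p).natDegree ≤ p.natDegree + 2 := by
        refine natDegree_mul_le.trans ?_
        omega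
      have hA3 : (2 * C c * X ^ 2 + 2 * C c ^ 2 * X - 2 * C c * X ^ 3 - 2 * C c ^ 2 * X ^ 2 : ℝ[X]).natDegree ≤ 3 := by
        compute_degree
      have hdc2 : ((derivative p).comp (-X)).natDegree ≤ p.natDegree - 1 := by
        refine natDegree_comp_le.trans ?_
        simpa using hder
      have h3 : ((2 * C c * X ^ 2 + 2 * C c ^ 2 * X - 2 * C c * X ^ 3 - 2 * C c ^ 2 * X ^ 2)
          * ((derivative p).comp (-X))).natDegree ≤ p.natDegree + 2 := by
        refine natDegree_mul_le.trans ?_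
        omega
      have htot : (X ^ 3 * q2).natDegree ≤ p.natDegree + 2 := by
        rw [← hN]
        exact (natDegree_sub_le _ _).trans
          (max_le ((natDegree_add_le _ _).trans (max_le h1 h2)) h3)
      rw [natDegree_mul (pow_ne_zero 3 X_ne_zero) h0, natDegree_X_pow] at htot
      apply degree_lt_degree
      rw [natDegree_C_mul (by norm_num : (2⁻¹:ℝ) ≠ 0)]
      omega
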